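/- Let w(x,y) be a word in the free group on {x,y} with w(x,y)⁻¹ = w(y⁻¹, x⁻¹) as elements of the free group. If w(x,y) = x^{i₁} y^{j₁} ⋯ x^{i_k} y^{j_k} in reduced alternating form, then i_m = j_{k+1−m} for all m = 1, …, k. -/

import Mathlib

open List

namespace PalAux

abbrev W := List (Bool × Bool)

def enc (c : Bool) (n : ℤ) : W := List.replicate n.natAbs (c, decide (0 < n))

lemma mem_enc {c : Bool} {n : ℤ} {p : Bool × Bool} (h : p ∈ enc c n) :
    p = (c, decide (0 < n)) := List.eq_of_mem_replicate h

lemma fst_of_mem_enc {c : Bool} {n : ℤ} {p : Bool × Bool} (h : p ∈ enc c n) :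
    p.1 = c := by rw [mem_enc h]

lemma mk_rep (c : Bool) : ∀ n : ℕ,
    FreeGroup.mk (List.replicate n (c, true)) = FreeGroup.of c ^ n
  | 0 => by simp [FreeGroup.one_eq_mk]
  | n+1 => by
      rw [List.replicate_succ, ← List.singleton_append, ← FreeGroup.mul_mk,
        mk_rep c n, pow_succ']
      rfl

lemma mk_enc (c : Bool) (n : ℤ) : FreeGroup.mk (enc c n) = FreeGroup.of c ^ n := by
  cases n with
  | ofNat m =>
    cases m with
    | zero => simp [enc, FreeGroup.one_eq_mk]
    | succ m =>
      have hd : decide ((0 : ℤ) < Int.ofNat (m+1)) = true := decide_eq_true (Int.natCast_pos.mpr (Nat.succ_pos m))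
      simp only [enc, hd, Int.natAbs_natCast]
      rw [mk_rep]
      exact (zpow_natCast _ _).symm
  | negSucc m =>
    have h1 : decide ((0:ℤ) < Int.negSucc m) = false :=
      decide_eq_false (by exact not_lt.mpr (le_of_lt (Int.negSucc_lt_zero m)))
    have h2 : (Int.negSucc m).natAbs = m + 1 := rfl
    simp only [enc, h1, h2]
    have : List.replicate (m+1) ((c, false) : Bool × Bool)
        = FreeGroup.invRev (List.replicate (m+1) (c, true)) := by
      simp [FreeGroup.invRev, List.map_replicate, List.reverse_replicate]
    rw [this, ← FreeGroup.inv_mk, mk_rep, zpow_negSucc]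

def blk : List (ℤ × ℤ) → W
  | [] => []
  | p :: r => enc true p.1 ++ (enc false p.2 ++ blk r)

lemma mk_blk : ∀ l : List (ℤ × ℤ), FreeGroup.mk (blk l)
    = (l.map fun p => FreeGroup.of true ^ p.1 * FreeGroup.of false ^ p.2).prod
  | [] => by simp [blk, FreeGroup.one_eq_mk]
  | p :: r => by
    rw [blk, ← FreeGroup.mul_mk, ← FreeGroup.mul_mk, mk_enc, mk_enc, mk_blk r]
    simp [mul_assoc]

def Good : List (ℤ × ℤ) → Prop
  | [] => True
  | [_] => True
  | p :: q :: r => p.2 ≠ 0 ∧ q.1 ≠ 0 ∧ Good (q :: r)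

lemma Good.tail : ∀ {l} {p : ℤ × ℤ}, Good (p :: l) → Good l
  | [], _, _ => trivial
  | _ :: _, _, h => h.2.2

def R (a b : Bool × Bool) : Prop := a.1 ≠ b.1 ∨ a.2 = b.2

lemma reduce_eq_self : ∀ L : W, List.Chain' R L → FreeGroup.reduce L = L
  | [], _ => rfl
  | x :: L, h => by
    rw [FreeGroup.reduce.cons, reduce_eq_self L h.tail]
    cases L with
    | nil => rfl
    | cons y t =>
      have hr : R x y := (List.isChain_cons_cons.mp h).1
      have hne : ¬ (x.1 = y.1 ∧ x.2 = !y.2) := by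
        rcases hr with h1 | h1
        · tauto
        · rintro ⟨-, h2⟩; rw [h1] at h2; simp at h2
      simp [hne]

lemma chain'_enc (c : Bool) (n : ℤ) : List.Chain' R (enc c n) :=
  List.isChain_replicate_of_rel _ (Or.inr rfl)

lemma head_blk_true : ∀ {l : List (ℤ × ℤ)},
    (∀ q ∈ l.head?, q.1 ≠ 0) → ∀ s ∈ (blk l).head?, s.1 = true
  | [], _, s, hs => by simp [blk] at hs
  | q :: r, h, s, hs => by
    have hq : q.1 ≠ 0 := h q rfl
    have hne : enc true q.1 ≠ [] := by
      simp only [enc, ne_eq, List.replicate_eq_nil_iff, Int.natAbs_eq_zero]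
      exact hq
    exact fst_of_mem_enc (by
      rw [blk, List.head?_append_of_ne_nil _ hne] at hs
      exact List.mem_of_mem_head? hs)

lemma head_tailblk_false {p : ℤ × ℤ} {r : List (ℤ × ℤ)} (hg : Good (p :: r)) :
    ∀ s ∈ (enc false p.2 ++ blk r).head?, s.1 = false := by
  intro s hs
  cases r with
  | nil =>
    simp only [blk, List.append_nil] at hs
    exact fst_of_mem_enc (List.mem_of_mem_head? hs)
  | cons q r' =>
    have hp : p.2 ≠ 0 := hg.1
    have hne : enc false p.2 ≠ [] := by
      simp [enc]
      omega
    rw [List.head?_append_of_ne_nil _ hne] at hs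
    exact fst_of_mem_enc (List.mem_of_mem_head? hs)

lemma chain_blk : ∀ l : List (ℤ × ℤ), Good l → List.Chain' R (blk l)
  | [], _ => List.isChain_nil
  | p :: r, hg => by
    rw [blk]; show List.IsChain R _; rw [List.isChain_append, List.isChain_append]
    refine ⟨chain'_enc _ _, ⟨chain'_enc _ _, chain_blk r hg.tail, ?_⟩, ?_⟩
    · intro x hx y hy
      left
      have hx1 : x.1 = false := fst_of_mem_enc (List.mem_of_mem_getLast? hx)
      have hy1 : y.1 = true := by
        refine head_blk_true ?_ y hy
        intro q hq
        cases r with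
        | nil => simp at hq
        | cons q' r' =>
          simp only [List.head?_cons, Option.mem_some_iff] at hq
          subst hq
          exact hg.2.1
      rw [hx1, hy1]; simp
    · intro x hx y hy
      left
      have hx1 : x.1 = true := fst_of_mem_enc (List.mem_of_mem_getLast? hx)
      have hy1 : y.1 = false := head_tailblk_false hg y hy
      rw [hx1, hy1]; simp

lemma strip_rep : ∀ (m n : ℕ) (u v : Bool × Bool) (L L' : W),
    u.1 = v.1 →
    (∀ p ∈ L.head?, p.1 ≠ u.1) → (∀ p ∈ L'.head?, p.1 ≠ u.1) →
    List.replicate m u ++ L = List.replicate n v ++ L' →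
    m = n ∧ (0 < m → u = v) ∧ L = L'
  | 0, 0, u, v, L, L', _, _, _, h => ⟨rfl, fun h0 => absurd h0 (by omega), by simpa using h⟩
  | 0, n+1, u, v, L, L', huv, hL, _, h => by
    exfalso
    rw [List.replicate_succ] at h
    simp only [List.replicate, List.nil_append, List.cons_append] at h
    have : v ∈ L.head? := by rw [h]; rfl
    exact hL v this (huv ▸ rfl)
  | m+1, 0, u, v, L, L', huv, _, hL', h => by
    exfalso
    rw [List.replicate_succ] at h
    simp only [List.replicate, List.nil_append, List.cons_append] at h
    have : u ∈ L'.head? := by rw [← h]; rfl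
    exact hL' u this rfl
  | m+1, n+1, u, v, L, L', huv, hL, hL', h => by
    rw [List.replicate_succ, List.replicate_succ] at h
    simp only [List.cons_append, List.cons.injEq] at h
    obtain ⟨huv', h⟩ := h
    obtain ⟨h1, _, h3⟩ := strip_rep m n u v L L' huv hL hL' h
    exact ⟨by omega, fun _ => huv', h3⟩

lemma strip (c : Bool) (a a' : ℤ) (L L' : W)
    (hL : ∀ p ∈ L.head?, p.1 ≠ c) (hL' : ∀ p ∈ L'.head?, p.1 ≠ c)
    (h : enc c a ++ L = enc c a' ++ L') : a = a' ∧ L = L' := by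
  obtain ⟨h1, h2, h3⟩ := strip_rep a.natAbs a'.natAbs (c, decide (0 < a))
    (c, decide (0 < a')) L L' rfl hL hL' h
  refine ⟨?_, h3⟩
  rcases Nat.eq_zero_or_pos a.natAbs with h0 | h0
  · omega
  · have hd : (decide (0 < a)) = decide (0 < a') := congrArg Prod.snd (h2 h0)
    have : (0 < a) ↔ (0 < a') := by simpa using hd
    omega

lemma decode : ∀ (l l' : List (ℤ × ℤ)), l.length = l'.length →
    Good l → Good l' → blk l = blk l' → l = l'
  | [], [], _, _, _, _ => rfl
  | [], _ :: _, hlen, _, _, _ => by simp at hlen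
  | _ :: _, [], hlen, _, _, _ => by simp at hlen
  | p :: r, p' :: r', hlen, hg, hg', h => by
    rw [blk, blk] at h
    obtain ⟨e1, h⟩ := strip true p.1 p'.1 _ _
      (fun s hs => by rw [head_tailblk_false hg s hs]; simp)
      (fun s hs => by rw [head_tailblk_false hg' s hs]; simp) h
    have hr : ∀ q ∈ r.head?, q.1 ≠ 0 := by
      cases r with
      | nil => intro q hq; simp at hq
      | cons q' r2 => intro q hq; simp only [List.head?_cons, Option.mem_some_iff] at hq;
                      subst hq; exact hg.2.1
    have hr' : ∀ q ∈ r'.head?, q.1 ≠ 0 := by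
      cases r' with
      | nil => intro q hq; simp at hq
      | cons q' r2 => intro q hq; simp only [List.head?_cons, Option.mem_some_iff] at hq;
                      subst hq; exact hg'.2.1
    obtain ⟨e2, h⟩ := strip false p.2 p'.2 _ _
      (fun s hs => by rw [head_blk_true hr s hs]; simp)
      (fun s hs => by rw [head_blk_true hr' s hs]; simp) h
    have := decode r r' (by simpa using hlen) hg.tail hg'.tail h
    rw [this, Prod.ext e1 e2]

lemma good_cons : ∀ {l : List (ℤ × ℤ)} {p : ℤ × ℤ},
    (l ≠ [] → p.2 ≠ 0) → (∀ q ∈ l.head?, q.1 ≠ 0) → Good l → Good (p :: l)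
  | [], _, _, _, _ => trivial
  | q :: r, p, h1, h2, hg => ⟨h1 (by simp), h2 q rfl, hg⟩

lemma good_ofFn : ∀ (k : ℕ) (f : Fin k → ℤ × ℤ),
    (∀ m : Fin k, (m : ℕ) ≠ 0 → (f m).1 ≠ 0) →
    (∀ m : Fin k, (m : ℕ) ≠ k - 1 → (f m).2 ≠ 0) →
    Good (List.ofFn f)
  | 0, _, _, _ => by rw [List.ofFn_zero]; trivial
  | (n+1), f, h1, h2 => by
    rw [List.ofFn_succ]
    refine good_cons ?_ ?_ ?_
    · intro hne
      have hn : n ≠ 0 := by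
        intro h0; subst h0; simp at hne
      exact h2 0 (by simpa using fun h => hn h.symm)
    · intro q hq
      cases n with
      | zero => simp at hq
      | succ m =>
        rw [List.ofFn_succ, List.head?_cons, Option.mem_some_iff] at hq
        subst hq
        exact h1 (Fin.succ 0) (by simp)
    · exact good_ofFn n (fun m => f m.succ)
        (fun m _ => h1 m.succ (by simp))
        (fun m hm => h2 m.succ (by simp only [Fin.val_succ]; omega))

lemma reverse_ofFn {α : Type*} {n : ℕ} (f : Fin n → α) :
    (List.ofFn f).reverse = List.ofFn (fun i => f i.rev) := by
  apply List.ext_getElem (by simp)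
  intro idx h1 h2
  simp only [List.getElem_reverse, List.getElem_ofFn, List.length_ofFn] at *
  congr 1
  ext
  simp [Fin.val_rev]
  omega

end PalAux

theorem exponents_palindromic_of_inv_symmetry
    (w : FreeGroup Bool) (k : ℕ) (i j : Fin k → ℤ)
    (hw : w = (List.ofFn fun m : Fin k =>
      (FreeGroup.of false) ^ (i m) * (FreeGroup.of true) ^ (j m)).prod)
    (hred : ∀ m : Fin k, ((m : ℕ) ≠ 0 → i m ≠ 0) ∧ ((m : ℕ) ≠ k - 1 → j m ≠ 0))
    (hsym : w⁻¹ = FreeGroup.lift (fun t : Bool =>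
      bif t then (FreeGroup.of false)⁻¹ else (FreeGroup.of true)⁻¹) w) :
    ∀ m : Fin k, i m = j m.rev := by
  have good1 : PalAux.Good (List.ofFn fun m : Fin k => ((-(j m.rev), -(i m.rev)) : ℤ × ℤ)) := by
    refine PalAux.good_ofFn k _ (fun m hm => ?_) (fun m hm => ?_)
    · have hrev : (m.rev : ℕ) ≠ k - 1 := by
        have h1 := m.isLt
        have h2 := Fin.val_rev m
        omega
      simpa using (hred m.rev).2 hrev
    · have hrev : (m.rev : ℕ) ≠ 0 := by
        have h1 := m.isLt
        have h2 := Fin.val_rev m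
        omega
      simpa using (hred m.rev).1 hrev
  have good2 : PalAux.Good (List.ofFn fun m : Fin k => ((-(i m), -(j m)) : ℤ × ℤ)) := by
    refine PalAux.good_ofFn k _ (fun m hm => ?_) (fun m hm => ?_)
    · simpa using (hred m).1 hm
    · simpa using (hred m).2 hm
  have h1 : w⁻¹ = FreeGroup.mk (PalAux.blk
      (List.ofFn fun m : Fin k => ((-(j m.rev), -(i m.rev)) : ℤ × ℤ))) := by
    rw [PalAux.mk_blk, List.map_ofFn, hw, List.prod_inv_reverse, List.map_ofFn,
      PalAux.reverse_ofFn]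
    refine congrArg (List.prod ∘ List.ofFn) (funext fun m => ?_)
    simp [Function.comp, mul_inv_rev, ← zpow_neg]
  have h2 : FreeGroup.lift (fun t : Bool =>
      bif t then (FreeGroup.of false)⁻¹ else (FreeGroup.of true)⁻¹) w
      = FreeGroup.mk (PalAux.blk
      (List.ofFn fun m : Fin k => ((-(i m), -(j m)) : ℤ × ℤ))) := by
    rw [PalAux.mk_blk, List.map_ofFn, hw, map_list_prod, List.map_ofFn]
    refine congrArg (List.prod ∘ List.ofFn) (funext fun m => ?_)
    simp only [Function.comp, map_mul, map_zpow, FreeGroup.lift_apply_of, cond_true, cond_false]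
    rw [inv_zpow', inv_zpow']
  have hmk : FreeGroup.mk (PalAux.blk
      (List.ofFn fun m : Fin k => ((-(j m.rev), -(i m.rev)) : ℤ × ℤ)))
      = FreeGroup.mk (PalAux.blk
      (List.ofFn fun m : Fin k => ((-(i m), -(j m)) : ℤ × ℤ))) := by
    rw [← h1, ← h2, hsym]
  have hred' := FreeGroup.reduce.sound hmk
  rw [PalAux.reduce_eq_self _ (PalAux.chain_blk _ good1),
    PalAux.reduce_eq_self _ (PalAux.chain_blk _ good2)] at hred'
  have hlist := PalAux.decode _ _ (by simp) good1 good2 hred'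
  have hfun := List.ofFn_injective hlist
  intro m
  have := congrArg Prod.fst (congrFun hfun m)
  simp only at this
  omega
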